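/- Under the LocalGD iteration r^{(t+1)} = r^{(t)} − Q r_{S_t}^{(t)} with Q = I − βP, P ≥ 0, βP_max < 1, r^{(0)} ≥ 0, and r^{(T)} ≠ 0, if γ_t = ||r_{S_t}^{(t)}||_1/||r^{(t)}||_1 and γ̄_T = (1/T)Σ_{t=0}^{T-1} γ_t > 0, then T ≤ (1/(γ̄_T(1 − βP_max))) · ln(||r^{(0)}||_1/||r^{(T)}||_1). -/
import Mathlib


open Matrix

/-- Iteration bound of LocalGD: if the process runs to time `T` with `r^{(T)} ≠ 0`
and average active ratio `γ̄_T = (1/T) Σ_{t<T} γ_t > 0`, where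
`γ_t = ‖r_{S_t}^{(t)}‖₁ / ‖r^{(t)}‖₁`, then
`T ≤ (1/(γ̄_T (1 - β P_max))) · ln(‖r^{(0)}‖₁ / ‖r^{(T)}‖₁)`. -/
theorem localGD_iteration_bound (n : ℕ) (P : Matrix (Fin n) (Fin n) ℝ)
    (hP : ∀ i j, 0 ≤ P i j) (β : ℝ) (hβ : 0 ≤ β)
    (Pmax : ℝ)
    (hPmax : ∀ v : Fin n → ℝ, (∀ i, 0 ≤ v i) →
      ∑ i, |(P *ᵥ v) i| ≤ Pmax * ∑ i, |v i|)
    (hβP : β * Pmax < 1)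
    (r : ℕ → Fin n → ℝ) (hr0 : ∀ i, 0 ≤ r 0 i)
    (S : ℕ → Finset (Fin n))
    (hrec : ∀ t, r (t + 1) =
      r t - (1 - β • P) *ᵥ (fun i => if i ∈ S t then r t i else 0))
    (T : ℕ) (hT : r T ≠ 0)
    (γbar : ℝ)
    (hγ : γbar = (1 / (T : ℝ)) *
      ∑ t ∈ Finset.range T, (∑ i ∈ S t, |r t i|) / (∑ i, |r t i|))
    (hγpos : 0 < γbar) :
    (T : ℝ) ≤ (1 / (γbar * (1 - β * Pmax))) *
      Real.log ((∑ i, |r 0 i|) / (∑ i, |r T i|)) := by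
  classical
  set c : ℝ := 1 - β * Pmax with hc
  have hcpos : 0 < c := by rw [hc]; linarith
  -- pointwise recurrence
  have hrec' : ∀ t i, r (t + 1) i =
      r t i - (if i ∈ S t then r t i else 0)
      + β * (P *ᵥ (fun j => if j ∈ S t then r t j else 0)) i := by
    intro t i
    have h := congrFun (hrec t) i
    rw [h]
    simp only [Pi.sub_apply, Matrix.sub_mulVec, Matrix.one_mulVec,
      Matrix.smul_mulVec, Pi.smul_apply, smul_eq_mul]
    ring
  have hPv : ∀ (v : Fin n → ℝ), (∀ j, 0 ≤ v j) → ∀ i, 0 ≤ (P *ᵥ v) i := by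
    intro v hv i
    simp only [Matrix.mulVec, dotProduct]
    exact Finset.sum_nonneg fun j _ => mul_nonneg (hP i j) (hv j)
  -- nonnegativity of iterates
  have hnonneg : ∀ t i, 0 ≤ r t i := by
    intro t
    induction t with
    | zero => exact hr0
    | succ t ih =>
      intro i
      rw [hrec' t i]
      have h1 : 0 ≤ r t i - (if i ∈ S t then r t i else 0) := by
        split <;> simp [ih i]
      have h2 : 0 ≤ β * (P *ᵥ fun j => if j ∈ S t then r t j else 0) i :=
        mul_nonneg hβ (hPv _ (fun j => by split <;> simp [ih j]) i)
      linarith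
  set N : ℕ → ℝ := fun t => ∑ i, r t i with hN
  have habs : ∀ t, ∑ i, |r t i| = N t := fun t =>
    Finset.sum_congr rfl fun i _ => abs_of_nonneg (hnonneg t i)
  have hNnonneg : ∀ t, 0 ≤ N t := fun t =>
    Finset.sum_nonneg fun i _ => hnonneg t i
  -- zero propagation
  have hzero : ∀ t, r t = 0 → ∀ k, r (t + k) = 0 := by
    intro t h0 k
    induction k with
    | zero => exact h0
    | succ k ih =>
      funext i
      have hz : ∀ j, r (t + k) j = 0 := fun j => congrFun ih j
      rw [show t + (k + 1) = (t + k) + 1 from rfl, hrec' (t + k) i]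
      have : (fun j => if j ∈ S (t + k) then r (t + k) j else 0)
          = (0 : Fin n → ℝ) := by
        funext j; simp [hz j]
      rw [this, Matrix.mulVec_zero]
      simp [hz i]
  have hNpos : ∀ t, t ≤ T → 0 < N t := by
    intro t ht
    rcases (hNnonneg t).lt_or_eq with h | h
    · exact h
    · exfalso
      have h0 : r t = 0 := by
        funext i
        exact (Finset.sum_eq_zero_iff_of_nonneg
          (fun i _ => hnonneg t i)).mp h.symm i (Finset.mem_univ i)
      have h1 := hzero t h0 (T - t)
      rw [Nat.add_sub_cancel' ht] at h1
      exact hT h1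
  -- the key one-step contraction
  have hA : ∀ t, ∑ i, (if i ∈ S t then r t i else 0) = ∑ i ∈ S t, r t i := by
    intro t
    rw [Finset.sum_ite_mem, Finset.univ_inter]
  have hkey : ∀ t, N (t + 1) ≤ N t - c * (∑ i ∈ S t, r t i) := by
    intro t
    have hv : ∀ j, 0 ≤ (if j ∈ S t then r t j else 0) := fun j => by
      split <;> simp [hnonneg t j]
    have hB : ∑ i, (P *ᵥ fun j => if j ∈ S t then r t j else 0) i
        ≤ Pmax * ∑ i ∈ S t, r t i := by
      calc ∑ i, (P *ᵥ fun j => if j ∈ S t then r t j else 0) i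
          = ∑ i, |(P *ᵥ fun j => if j ∈ S t then r t j else 0) i| :=
            Finset.sum_congr rfl fun i _ => (abs_of_nonneg (hPv _ hv i)).symm
        _ ≤ Pmax * ∑ j, |if j ∈ S t then r t j else 0| := hPmax _ hv
        _ = Pmax * ∑ i ∈ S t, r t i := by
            rw [← hA t]
            exact congrArg (Pmax * ·)
              (Finset.sum_congr rfl fun j _ => abs_of_nonneg (hv j))
    calc N (t + 1)
        = ∑ i, (r t i - (if i ∈ S t then r t i else 0)
            + β * (P *ᵥ fun j => if j ∈ S t then r t j else 0) i) :=
          Finset.sum_congr rfl fun i _ => hrec' t i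
      _ = N t - (∑ i ∈ S t, r t i)
            + β * ∑ i, (P *ᵥ fun j => if j ∈ S t then r t j else 0) i := by
          rw [Finset.sum_add_distrib, Finset.sum_sub_distrib, ← Finset.mul_sum,
            hA t]
      _ ≤ N t - (∑ i ∈ S t, r t i) + β * (Pmax * ∑ i ∈ S t, r t i) := by
          have := mul_le_mul_of_nonneg_left hB hβ
          linarith
      _ = N t - c * ∑ i ∈ S t, r t i := by rw [hc]; ring
  -- γ_t in the statement
  set g : ℕ → ℝ := fun t => (∑ i ∈ S t, |r t i|) / (∑ i, |r t i|) with hg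
  have hgA : ∀ t, t < T → (∑ i ∈ S t, r t i) = g t * N t := by
    intro t ht
    have hpos := hNpos t ht.le
    rw [hg]
    simp only
    rw [habs t]
    rw [div_mul_cancel₀ _ (ne_of_gt hpos)]
    exact Finset.sum_congr rfl fun i _ =>
      (abs_of_nonneg (hnonneg t i)).symm
  -- log step
  have hlog : ∀ t, t < T →
      Real.log (N (t + 1)) - Real.log (N t) ≤ -(c * g t) := by
    intro t ht
    have hNt := hNpos t ht.le
    have hNt1 := hNpos (t + 1) ht
    have hstep : N (t + 1) ≤ (1 - c * g t) * N t := by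
      have := hkey t
      rw [hgA t ht] at this
      nlinarith [this]
    have hfac : 0 < 1 - c * g t := by
      have : 0 < (1 - c * g t) * N t := lt_of_lt_of_le hNt1 hstep
      by_contra hcon
      push_neg at hcon
      nlinarith
    calc Real.log (N (t + 1)) - Real.log (N t)
        ≤ Real.log ((1 - c * g t) * N t) - Real.log (N t) := by
          have := Real.log_le_log hNt1 hstep
          linarith
      _ = Real.log (1 - c * g t) := by
          rw [Real.log_mul (ne_of_gt hfac) (ne_of_gt hNt)]; ring
      _ ≤ (1 - c * g t) - 1 := Real.log_le_sub_one_of_pos hfac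
      _ = -(c * g t) := by ring
  -- T ≠ 0
  have hTpos : 0 < T := by
    rcases Nat.eq_zero_or_pos T with h | h
    · exfalso
      rw [h] at hγ
      simp at hγ
      rw [hγ] at hγpos
      exact lt_irrefl 0 hγpos
    · exact h
  -- telescoping
  have hsum : Real.log (N T) - Real.log (N 0)
      ≤ -(c * ∑ t ∈ Finset.range T, g t) := by
    have h1 : ∑ t ∈ Finset.range T,
        (Real.log (N (t + 1)) - Real.log (N t))
        = Real.log (N T) - Real.log (N 0) :=
      Finset.sum_range_sub (fun t => Real.log (N t)) T
    have h2 : ∑ t ∈ Finset.range T,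
        (Real.log (N (t + 1)) - Real.log (N t))
        ≤ ∑ t ∈ Finset.range T, (-(c * g t)) :=
      Finset.sum_le_sum fun t ht => hlog t (Finset.mem_range.mp ht)
    rw [h1] at h2
    calc Real.log (N T) - Real.log (N 0)
        ≤ ∑ t ∈ Finset.range T, -(c * g t) := h2
      _ = -(c * ∑ t ∈ Finset.range T, g t) := by
          rw [Finset.mul_sum, ← Finset.sum_neg_distrib]
  have hsumg : ∑ t ∈ Finset.range T, g t = (T : ℝ) * γbar := by
    have hT0 : (T : ℝ) ≠ 0 := Nat.cast_ne_zero.mpr hTpos.ne'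
    rw [hγ]
    field_simp
  have hfinal : c * ((T : ℝ) * γbar) ≤ Real.log (N 0 / N T) := by
    rw [Real.log_div (ne_of_gt (hNpos 0 (Nat.zero_le T)))
      (ne_of_gt (hNpos T le_rfl))]
    rw [hsumg] at hsum
    linarith
  rw [habs 0, habs T, hc] at *
  rw [one_div, ← div_eq_inv_mul, le_div_iff₀ (mul_pos hγpos hcpos)]
  calc (T : ℝ) * (γbar * c) = c * ((T : ℝ) * γbar) := by ring
    _ ≤ Real.log (N 0 / N T) := hfinal
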